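/- Let A be an essentially small finitary abelian category over a finite field with q elements. For any objects L, M, N of A, let g^L_{M,N} denote the number of subobjects X of L with X ≅ N and L/X ≅ M, and let Ext^1(M,N)_L denote the set of equivalence classes of short exact sequences 0 → N → L → M → 0 (extensions of M by N with middle term isomorphic to L). Then g^L_{M,N} = (|Ext^1_A(M,N)_L| / |Hom_A(M,N)|) · (|Aut_A(L)| / (|Aut_A(M)|·|Aut_A(N)|)) (the Riedtmann–Peng formula). -/

import Mathlib

open CategoryTheory Limits

namespace RiedtmannPeng

variable {C : Type*} [Category C] [Abelian C]

/-- The Hall number `g^L_{M,N}`: the number of subobjects `X ⊆ L` with `X ≅ N` and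
`L/X ≅ M`. -/
noncomputable def gHall (L M N : C) : ℕ :=
  Nat.card {X : Subobject L // Nonempty ((X : C) ≅ N) ∧ Nonempty (cokernel X.arrow ≅ M)}

/-- Short exact sequences `0 → N → L → M → 0` with middle term the given object `L`. -/
def ExtW (M N L : C) : Type _ :=
  {fg : (N ⟶ L) × (L ⟶ M) //
    ∃ w : fg.1 ≫ fg.2 = 0, (ShortComplex.mk fg.1 fg.2 w).ShortExact}

/-- `Ext^1_A(M,N)_L`: equivalence classes of short exact sequences `0 → N → L → M → 0`
with middle term `L`, two sequences being equivalent when they differ by an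
automorphism of `L` compatible with the identity on `M` and `N`. -/
def ExtClassesL (M N L : C) : Type _ :=
  Quot (fun p q : ExtW M N L =>
    ∃ φ : Aut L, p.1.1 ≫ φ.hom = q.1.1 ∧ φ.hom ≫ q.1.2 = p.1.2)

/-! ### Auxiliary material for the proof -/

section Aux

/-- Counting along a map with fibers of uniform (weighted) cardinality. -/
private lemma count_fibers {α : Type*} {β : Type*} [Finite α] (f : α → β) (m n : ℕ)
    (hn : n ≠ 0) (h : ∀ b, Nat.card {a // f a = b} * m = n) :
    Nat.card α * m = Nat.card β * n := by
  classical
  have hne : ∀ b : β, Nonempty {a // f a = b} := by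
    intro b
    have h0 : Nat.card {a // f a = b} ≠ 0 := by
      intro h0
      rw [← h b, h0, zero_mul] at hn
      exact hn rfl
    exact (Nat.card_ne_zero.mp h0).1
  have hsurj : Function.Surjective f := fun b => ⟨(hne b).some.1, (hne b).some.2⟩
  have : Finite β := Finite.of_surjective f hsurj
  cases nonempty_fintype α
  cases nonempty_fintype β
  have inst : ∀ b, Fintype {a // f a = b} := fun b => Fintype.ofFinite _
  rw [Nat.card_eq_fintype_card, Nat.card_eq_fintype_card,
    ← Fintype.card_congr (Equiv.sigmaFiberEquiv f), Fintype.card_sigma, Finset.sum_mul]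
  have hb : ∀ b : β, Fintype.card {a // f a = b} * m = n := by
    intro b
    rw [← Nat.card_eq_fintype_card]
    exact h b
  calc (∑ b : β, Fintype.card {a // f a = b} * m) = ∑ _b : β, n := by
        simp only [hb]
    _ = Fintype.card β * n := by
        simp [Finset.sum_const, Finset.card_univ, mul_comm]

private lemma card_iso_congr {X Y Z : C} (e : Y ≅ Z) :
    Nat.card (X ≅ Y) = Nat.card (X ≅ Z) :=
  Nat.card_congr
    { toFun := fun i => i ≪≫ e
      invFun := fun j => j ≪≫ e.symm
      left_inv := fun i => Iso.ext (by simp)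
      right_inv := fun j => Iso.ext (by simp) }

variable {L M N : C}

private lemma ExtW.zero (w : ExtW M N L) : w.1.1 ≫ w.1.2 = 0 := w.2.choose

private lemma ExtW.shortExact (w : ExtW M N L) :
    (ShortComplex.mk w.1.1 w.1.2 w.zero).ShortExact := w.2.choose_spec

/-- The action of `Aut L` on short exact sequences `0 → N → L → M → 0`. -/
private def extWSMul (φ : Aut L) (w : ExtW M N L) : ExtW M N L :=
  ⟨(w.1.1 ≫ φ.hom, φ.inv ≫ w.1.2), by
    have hw := w.zero
    have hse := w.shortExact
    have hz : (w.1.1 ≫ φ.hom) ≫ (φ.inv ≫ w.1.2) = 0 := by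
      simp [reassoc_of% hw, hw, Iso.hom_inv_id_assoc φ]
    refine ⟨hz, ?_⟩
    exact ShortComplex.shortExact_of_iso
      (ShortComplex.isoMk (Iso.refl N) φ (Iso.refl M) (by simp) (by simp [Iso.hom_inv_id_assoc φ]) :
        ShortComplex.mk w.1.1 w.1.2 w.zero ≅ ShortComplex.mk _ _ hz) hse⟩

private instance : MulAction (Aut L) (ExtW M N L) where
  smul := extWSMul
  one_smul w := by
    apply Subtype.ext
    show ((w.1.1 ≫ (1 : Aut L).hom, (1 : Aut L).inv ≫ w.1.2) : (N ⟶ L) × (L ⟶ M)) = w.1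
    ext <;> simp [show (1 : Aut L) = Iso.refl L from rfl]
  mul_smul φ ψ w := by
    apply Subtype.ext
    show ((w.1.1 ≫ (φ * ψ).hom, (φ * ψ).inv ≫ w.1.2) : (N ⟶ L) × (L ⟶ M)) =
      ((w.1.1 ≫ ψ.hom) ≫ φ.hom, φ.inv ≫ ψ.inv ≫ w.1.2)
    ext <;> simp [show φ * ψ = ψ.trans φ from rfl, Iso.trans_hom, Iso.trans_inv]
    · rfl
    · exact Category.assoc _ _ _

private lemma extW_smul_def (φ : Aut L) (w : ExtW M N L) :
    (φ • w).1 = (w.1.1 ≫ φ.hom, φ.inv ≫ w.1.2) := rfl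

/-- The automorphism `𝟙 L + g ≫ h ≫ f` of `L` associated to `h : M ⟶ N`. -/
private def stabHom (w : ExtW M N L) (h : M ⟶ N) : Aut L where
  hom := 𝟙 L + w.1.2 ≫ h ≫ w.1.1
  inv := 𝟙 L - w.1.2 ≫ h ≫ w.1.1
  hom_inv_id := by
    have hw := w.zero
    simp [Preadditive.comp_sub, Preadditive.add_comp, Preadditive.sub_comp,
      Preadditive.comp_add, reassoc_of% hw]
  inv_hom_id := by
    have hw := w.zero
    simp [Preadditive.comp_sub, Preadditive.add_comp, Preadditive.sub_comp,
      Preadditive.comp_add, reassoc_of% hw]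

private lemma stabHom_mem (w : ExtW M N L) (h : M ⟶ N) :
    stabHom w h ∈ MulAction.stabilizer (Aut L) w := by
  have hw := w.zero
  rw [MulAction.mem_stabilizer_iff]
  apply Subtype.ext
  rw [extW_smul_def]
  ext
  · show w.1.1 ≫ (stabHom w h).hom = w.1.1
    simp [stabHom, Preadditive.comp_add, reassoc_of% hw]
  · show (stabHom w h).inv ≫ w.1.2 = w.1.2
    simp [stabHom, Preadditive.sub_comp, hw]

private lemma card_stabilizer (w : ExtW M N L) :
    Nat.card (MulAction.stabilizer (Aut L) w) = Nat.card (M ⟶ N) := by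
  have hse := w.shortExact
  haveI : Mono w.1.1 := hse.mono_f
  haveI : Epi w.1.2 := hse.epi_g
  refine (Nat.card_congr (Equiv.ofBijective
    (fun h : M ⟶ N => (⟨stabHom w h, stabHom_mem w h⟩ : MulAction.stabilizer (Aut L) w))
    ⟨?_, ?_⟩)).symm
  · intro h₁ h₂ hyp
    have : (stabHom w h₁).hom = (stabHom w h₂).hom :=
      congrArg Iso.hom (Subtype.ext_iff.mp hyp)
    have h12 : w.1.2 ≫ h₁ ≫ w.1.1 = w.1.2 ≫ h₂ ≫ w.1.1 := by
      have := add_left_cancel this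
      simpa using this
    rw [cancel_epi w.1.2] at h12
    exact (cancel_mono w.1.1).mp h12
  · rintro ⟨φ, hφ⟩
    rw [MulAction.mem_stabilizer_iff] at hφ
    have hφ1 := Subtype.ext_iff.mp hφ
    rw [extW_smul_def] at hφ1
    have hf : w.1.1 ≫ φ.hom = w.1.1 := congrArg Prod.fst hφ1
    have hg : φ.inv ≫ w.1.2 = w.1.2 := congrArg Prod.snd hφ1
    have hg' : φ.hom ≫ w.1.2 = w.1.2 := by
      conv_lhs => rw [← hg]
      exact Iso.hom_inv_id_assoc φ _
    have hψ : w.1.1 ≫ (φ.hom - 𝟙 L) = 0 := by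
      simp [Preadditive.comp_sub, hf]
    set u : M ⟶ L := hse.exact.desc (φ.hom - 𝟙 L) hψ with hu_def
    have hu : w.1.2 ≫ u = φ.hom - 𝟙 L := hse.exact.g_desc _ _
    have hug : u ≫ w.1.2 = 0 := by
      rw [← cancel_epi w.1.2, comp_zero, ← Category.assoc, hu]
      simp [Preadditive.sub_comp, hg']
    set h : M ⟶ N := hse.exact.lift u hug with hh_def
    have hhf : h ≫ w.1.1 = u := hse.exact.lift_f _ _
    refine ⟨h, Subtype.ext (Iso.ext ?_)⟩
    show 𝟙 L + w.1.2 ≫ h ≫ w.1.1 = φ.hom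
    rw [hhf, hu]
    abel

private def extClassesEquivOrbits :
    ExtClassesL M N L ≃ Quotient (MulAction.orbitRel (Aut L) (ExtW M N L)) where
  toFun := Quot.lift (fun p => Quotient.mk (MulAction.orbitRel (Aut L) (ExtW M N L)) p)
    (by
      rintro p q ⟨φ, h1, h2⟩
      apply Quotient.sound
      refine ⟨φ⁻¹, ?_⟩
      apply Subtype.ext
      rw [extW_smul_def]
      have hinv : (φ⁻¹ : Aut L).hom = φ.inv := rfl
      have hinv2 : (φ⁻¹ : Aut L).inv = φ.hom := rfl
      ext
      · show q.1.1 ≫ (φ⁻¹ : Aut L).hom = p.1.1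
        rw [hinv, ← h1]; simp [Iso.hom_inv_id φ]
      · show (φ⁻¹ : Aut L).inv ≫ q.1.2 = p.1.2
        rw [hinv2]; exact h2)
  invFun := Quotient.lift (fun p => Quot.mk _ p)
    (by
      intro p q hpq
      obtain ⟨ψ, hψ⟩ := hpq
      have h1 : q.1.1 ≫ ψ.hom = p.1.1 := by
        rw [← hψ, extW_smul_def]
      have h2 : ψ.hom ≫ p.1.2 = q.1.2 := by
        rw [← hψ, extW_smul_def]
        exact Iso.hom_inv_id_assoc ψ _
      exact (Quot.sound ⟨ψ, h1, h2⟩).symm)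
  left_inv := by
    apply Quot.ind
    intro p
    rfl
  right_inv := by
    apply Quotient.ind
    intro p
    rfl

private lemma count_B (hfin : ∀ X Y : C, Finite (X ⟶ Y)) :
    Nat.card (ExtW M N L) * Nat.card (M ⟶ N) =
      Nat.card (ExtClassesL M N L) * Nat.card (Aut L) := by
  haveI : Finite (ExtW M N L) :=
    Finite.of_injective (fun w : ExtW M N L => w.1) Subtype.val_injective
  haveI : Finite (Aut L) :=
    Finite.of_injective (fun φ : Aut L => φ.hom) (fun a b h => Iso.ext h)
  have hAutL : Nat.card (Aut L) ≠ 0 := Nat.card_ne_zero.mpr ⟨⟨1⟩, inferInstance⟩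
  have key := count_fibers (fun w : ExtW M N L =>
      Quotient.mk (MulAction.orbitRel (Aut L) (ExtW M N L)) w)
      (Nat.card (M ⟶ N)) (Nat.card (Aut L)) hAutL ?_
  · rw [key, Nat.card_congr (extClassesEquivOrbits (M := M) (N := N) (L := L))]
  · intro ω
    induction ω using Quotient.inductionOn with
    | h w₀ =>
      have e1 : {w : ExtW M N L //
            Quotient.mk (MulAction.orbitRel (Aut L) (ExtW M N L)) w =
              Quotient.mk (MulAction.orbitRel (Aut L) (ExtW M N L)) w₀} ≃
          MulAction.orbit (Aut L) w₀ :=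
        Equiv.subtypeEquivRight (fun w => by
          rw [Quotient.eq]
          exact Iff.rfl)
      have horb := Nat.card_congr (MulAction.orbitProdStabilizerEquivGroup (Aut L) w₀)
      rw [Nat.card_prod] at horb
      rw [Nat.card_congr e1, ← card_stabilizer w₀]
      exact horb

private lemma card_iso_congr' {X Y Z : C} (e : Y ≅ Z) :
    Nat.card (Y ≅ X) = Nat.card (Z ≅ X) :=
  Nat.card_congr
    { toFun := fun i => e.symm ≪≫ i
      invFun := fun j => e ≪≫ j
      left_inv := fun i => Iso.ext (by simp)
      right_inv := fun j => Iso.ext (by simp) }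

/-- The cokernel of the inclusion in a short exact sequence is the quotient. -/
private noncomputable def extWCokerIso (w : ExtW M N L) : cokernel w.1.1 ≅ M :=
  haveI : Epi w.1.2 := w.shortExact.epi_g
  IsColimit.coconePointUniqueUpToIso (cokernelIsCokernel w.1.1) w.shortExact.exact.gIsCokernel

/-- The subobject (with its properties) associated to a short exact sequence. -/
private noncomputable def extWProj (w : ExtW M N L) :
    {X : Subobject L // Nonempty ((X : C) ≅ N) ∧ Nonempty (cokernel X.arrow ≅ M)} :=
  haveI : Mono w.1.1 := w.shortExact.mono_f
  ⟨Subobject.mk w.1.1, ⟨Subobject.underlyingIso w.1.1⟩,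
    ⟨cokernelIsoOfEq (Subobject.underlyingIso_hom_comp_eq_mk w.1.1).symm ≪≫
      cokernelEpiComp (Subobject.underlyingIso w.1.1).hom w.1.1 ≪≫ extWCokerIso w⟩⟩

/-- The short exact sequence associated to a subobject together with compatible
isomorphisms. -/
private noncomputable def mkExtW (X : Subobject L) (α : N ≅ (X : C))
    (β : cokernel X.arrow ≅ M) : ExtW M N L := by
  refine ⟨(α.hom ≫ X.arrow, cokernel.π X.arrow ≫ β.hom), ?_, ?_⟩
  · simp
  · have base : (ShortComplex.mk X.arrow (cokernel.π X.arrow)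
        (cokernel.condition _)).ShortExact :=
      { exact := ShortComplex.exact_of_g_is_cokernel _ (cokernelIsCokernel _) }
    exact ShortComplex.shortExact_of_iso
      (ShortComplex.isoMk α.symm (Iso.refl L) β (by simp) (by simp)) base

private lemma count_A (hfin : ∀ X Y : C, Finite (X ⟶ Y)) :
    Nat.card (ExtW M N L) =
      gHall L M N * (Nat.card (Aut M) * Nat.card (Aut N)) := by
  haveI : Finite (ExtW M N L) :=
    Finite.of_injective (fun w : ExtW M N L => w.1) Subtype.val_injective
  haveI : Finite (Aut M) :=
    Finite.of_injective (fun φ : Aut M => φ.hom) (fun a b h => Iso.ext h)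
  haveI : Finite (Aut N) :=
    Finite.of_injective (fun φ : Aut N => φ.hom) (fun a b h => Iso.ext h)
  have hk : Nat.card (Aut M) * Nat.card (Aut N) ≠ 0 :=
    Nat.mul_ne_zero (Nat.card_ne_zero.mpr ⟨⟨1⟩, inferInstance⟩)
      (Nat.card_ne_zero.mpr ⟨⟨1⟩, inferInstance⟩)
  have key := count_fibers (extWProj (M := M) (N := N) (L := L)) 1
    (Nat.card (Aut M) * Nat.card (Aut N)) hk ?_
  · rw [mul_one] at key
    rw [key]
    rfl
  · rintro ⟨X, hX1, hX2⟩
    -- the fiber over `X` is in bijection with `(N ≅ X) × (cokernel X.arrow ≅ M)`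
    have hbij : Function.Bijective
        (fun p : (N ≅ (X : C)) × (cokernel X.arrow ≅ M) =>
          (⟨mkExtW X p.1 p.2, by
            apply Subtype.ext
            haveI : Mono (mkExtW X p.1 p.2).1.1 := (mkExtW X p.1 p.2).shortExact.mono_f
            exact (Subobject.mk_eq_mk_of_comm _ X.arrow p.1 rfl).trans
              (Subobject.mk_arrow X)⟩ :
          {w : ExtW M N L // extWProj w = ⟨X, hX1, hX2⟩})) := by
      constructor
      · rintro ⟨α, β⟩ ⟨α', β'⟩ hp
        have h1 : α.hom ≫ X.arrow = α'.hom ≫ X.arrow :=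
          congrArg (fun w => Prod.fst (Subtype.val (Subtype.val w))) hp
        have h2 : cokernel.π X.arrow ≫ β.hom = cokernel.π X.arrow ≫ β'.hom :=
          congrArg (fun w => Prod.snd (Subtype.val (Subtype.val w))) hp
        rw [cancel_mono X.arrow] at h1
        rw [cancel_epi (cokernel.π X.arrow)] at h2
        exact Prod.ext (Iso.ext h1) (Iso.ext h2)
      · rintro ⟨w, hw⟩
        haveI : Mono w.1.1 := w.shortExact.mono_f
        haveI : Epi w.1.2 := w.shortExact.epi_g
        have hmk : Subobject.mk w.1.1 = X := congrArg Subtype.val hw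
        have hmk' : Subobject.mk w.1.1 = Subobject.mk X.arrow := by
          rw [hmk, Subobject.mk_arrow]
        set α : N ≅ (X : C) := Subobject.isoOfMkEqMk w.1.1 X.arrow hmk' with hα_def
        have hα : α.hom ≫ X.arrow = w.1.1 := Subobject.ofMkLEMk_comp hmk'.le
        have hX' : X.arrow = α.inv ≫ w.1.1 := by
          rw [← hα, Iso.inv_hom_id_assoc]
        have z : X.arrow ≫ w.1.2 = 0 := by
          rw [hX', Category.assoc, w.zero, comp_zero]
        have S'SE : (ShortComplex.mk X.arrow w.1.2 z).ShortExact :=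
          ShortComplex.shortExact_of_iso
            (ShortComplex.isoMk α (Iso.refl L) (Iso.refl M)
              (by simp [hα]) (by simp) :
              ShortComplex.mk w.1.1 w.1.2 w.zero ≅ ShortComplex.mk X.arrow w.1.2 z)
            w.shortExact
        haveI : Epi (ShortComplex.mk X.arrow w.1.2 z).g := S'SE.epi_g
        set β : cokernel X.arrow ≅ M :=
          IsColimit.coconePointUniqueUpToIso (cokernelIsCokernel X.arrow)
            S'SE.exact.gIsCokernel with hβ_def
        have hβ : cokernel.π X.arrow ≫ β.hom = w.1.2 := by
          simpa using IsColimit.comp_coconePointUniqueUpToIso_hom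
            (cokernelIsCokernel X.arrow) S'SE.exact.gIsCokernel WalkingParallelPair.one
        refine ⟨⟨α, β⟩, ?_⟩
        apply Subtype.ext
        apply Subtype.ext
        show ((α.hom ≫ X.arrow, cokernel.π X.arrow ≫ β.hom) : (N ⟶ L) × (L ⟶ M)) = w.1
        rw [hα, hβ]
    have hcard : Nat.card {w : ExtW M N L // extWProj w = ⟨X, hX1, hX2⟩} =
        Nat.card ((N ≅ (X : C)) × (cokernel X.arrow ≅ M)) :=
      (Nat.card_congr (Equiv.ofBijective _ hbij)).symm
    rw [hcard, Nat.card_prod, mul_one]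
    obtain ⟨e1⟩ := hX1
    obtain ⟨e2⟩ := hX2
    rw [card_iso_congr e1, card_iso_congr' e2]
    show Nat.card (Aut N) * Nat.card (Aut M) = _
    rw [mul_comm]

end Aux

/-- Riedtmann–Peng formula: for a finitary abelian category over a finite
field, `g^L_{M,N} = (|Ext^1(M,N)_L| / |Hom(M,N)|) · (|Aut L| / (|Aut M|·|Aut N|))`. -/
theorem riedtmann_peng
    (𝕜 : Type) [Field 𝕜] [Fintype 𝕜] [CategoryTheory.Linear 𝕜 C]
    [EssentiallySmall C]
    [finitaryHom : ∀ M N : C, Finite (M ⟶ N)]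
    (finitaryExt : ∀ M N L : C, Finite (ExtClassesL M N L))
    (L M N : C) :
    (gHall L M N : ℚ) =
      (Nat.card (ExtClassesL M N L) : ℚ) / (Nat.card (M ⟶ N) : ℚ) *
        ((Nat.card (Aut L) : ℚ) / ((Nat.card (Aut M) : ℚ) * (Nat.card (Aut N) : ℚ))) := by
  haveI : Finite (Aut L) :=
    Finite.of_injective (fun φ : Aut L => φ.hom) fun a b h => Iso.ext h
  haveI : Finite (Aut M) :=
    Finite.of_injective (fun φ : Aut M => φ.hom) fun a b h => Iso.ext h
  haveI : Finite (Aut N) :=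
    Finite.of_injective (fun φ : Aut N => φ.hom) fun a b h => Iso.ext h
  have hA := count_A (L := L) (M := M) (N := N) (fun X Y => finitaryHom X Y)
  have hB := count_B (L := L) (M := M) (N := N) (fun X Y => finitaryHom X Y)
  have keyNat : gHall L M N * (Nat.card (Aut M) * Nat.card (Aut N)) * Nat.card (M ⟶ N) =
      Nat.card (ExtClassesL M N L) * Nat.card (Aut L) := by
    rw [← hA]; exact hB
  have key : (gHall L M N : ℚ) * ((Nat.card (Aut M) : ℚ) * (Nat.card (Aut N) : ℚ)) *
      (Nat.card (M ⟶ N) : ℚ) =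
      (Nat.card (ExtClassesL M N L) : ℚ) * (Nat.card (Aut L) : ℚ) := by
    exact_mod_cast congrArg (Nat.cast : ℕ → ℚ) keyNat
  have hH : (Nat.card (M ⟶ N) : ℚ) ≠ 0 :=
    Nat.cast_ne_zero.mpr (Nat.card_ne_zero.mpr ⟨⟨0⟩, finitaryHom M N⟩)
  have hM : (Nat.card (Aut M) : ℚ) ≠ 0 :=
    Nat.cast_ne_zero.mpr (Nat.card_ne_zero.mpr ⟨⟨1⟩, inferInstance⟩)
  have hN : (Nat.card (Aut N) : ℚ) ≠ 0 :=
    Nat.cast_ne_zero.mpr (Nat.card_ne_zero.mpr ⟨⟨1⟩, inferInstance⟩)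
  field_simp
  linear_combination key

end RiedtmannPeng
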